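/- arXiv:0708.1733 — 3 statements merged into one kernel-verified Lean document; each statement's English description precedes it below -/
import Mathlib

section
/- If ν is a probability measure on trees such that the marginal probabilities p_v = ν({y : y(v)=1}) satisfy p_{av} ≤ p_v for all v and a (which holds automatically since ν is supported on trees), then the function t defined by t(v) = 1 iff p_v ≥ 1/2 is itself a tree and is a d-mean of ν. -/
open MeasureTheory ENNReal

lemma meas_eval {m : ℕ} (v : List (Fin m)) (b : Bool) :
    MeasurableSet {y : List (Fin m) → Bool | y v = b} := by
  have h : {y : List (Fin m) → Bool | y v = b} = (fun y : List (Fin m) → Bool => y v) ⁻¹' {b} := rfl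
  rw [h]
  exact measurable_pi_apply v (measurableSet_singleton b)

lemma meas_ne {m : ℕ} (v : List (Fin m)) (b : Bool) :
    MeasurableSet {y : List (Fin m) → Bool | y v ≠ b} :=
  (meas_eval v b).compl

/-- If `ν` is a probability measure on trees (node set: finite strings over
`Fin m`) whose marginals `p v = ν {y : y v = 1}` satisfy `p (a :: v) ≤ p v`, then the
function `t` with `t v = 1 ↔ p v ≥ 1/2` is itself a tree and is a d-mean of `ν`. -/
theorem marginal_majority_tree_is_dMean (m : ℕ) (φ : List (Fin m) → ℝ)
    (hφpos : ∀ v, 0 < φ v) (hφsum : Summable φ)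
    (d : (List (Fin m) → Bool) → (List (Fin m) → Bool) → ℝ)
    (hd : ∀ t y, d t y = ∑' v, if t v = y v then (0 : ℝ) else φ v)
    (ν : Measure (List (Fin m) → Bool)) [IsProbabilityMeasure ν]
    (hmono : ∀ (v : List (Fin m)) (a : Fin m),
      ν {y | y (a :: v) = true} ≤ ν {y | y v = true})
    (t : List (Fin m) → Bool)
    (ht : ∀ v, t v = true ↔ (1 / 2 : ℝ≥0∞) ≤ ν {y | y v = true}) :
    (∀ (v : List (Fin m)) (a : Fin m), t (a :: v) ≤ t v) ∧
    (∀ s : List (Fin m) → Bool, ∫ y, d t y ∂ν ≤ ∫ y, d s y ∂ν) := by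
  have hcompl : ∀ (v : List (Fin m)) (b : Bool),
      ν {y | y v ≠ b} = 1 - ν {y | y v = b} := by
    intro v b
    have h : {y : List (Fin m) → Bool | y v ≠ b} = {y | y v = b}ᶜ := rfl
    rw [h, prob_compl_eq_one_sub (meas_eval v b)]
  have hhalf : (1 : ℝ≥0∞) - 1/2 = 1/2 := by
    simp [one_div, ENNReal.one_sub_inv_two]
  have hkey : ∀ (v : List (Fin m)) (b : Bool),
      ν {y | y v ≠ t v} ≤ ν {y | y v ≠ b} := by
    intro v b
    by_cases hb : b = t v
    · rw [hb]
    · have hset : {y : List (Fin m) → Bool | y v ≠ b} = {y | y v = t v} := by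
        ext y
        simp only [Set.mem_setOf_eq]
        cases hy : y v <;> cases htv : t v <;> cases hbv : b <;> subst hbv <;>
          rw [htv] at hb <;> revert hb <;> decide
      rw [hset]
      cases htv : t v with
      | true =>
        have h1 : (1/2 : ℝ≥0∞) ≤ ν {y | y v = true} := (ht v).mp htv
        have h2 : ν {y | y v ≠ true} ≤ 1/2 := by
          rw [hcompl]
          calc 1 - ν {y | y v = true} ≤ 1 - 1/2 := tsub_le_tsub_left h1 1
            _ = 1/2 := hhalf
        exact h2.trans h1
      | false =>
        have h1 : ¬ (1/2 : ℝ≥0∞) ≤ ν {y | y v = true} := by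
          intro h; exact (by simp [htv] : t v ≠ true) ((ht v).mpr h)
        have h1' : ν {y | y v = true} ≤ 1/2 := (lt_of_not_ge h1).le
        have h2 : (1/2 : ℝ≥0∞) ≤ ν {y | y v = false} := by
          have he : ν {y | y v = false} = 1 - ν {y | y v = true} := by
            rw [← hcompl]
            congr 1; ext y; simp
          rw [he]
          calc (1/2 : ℝ≥0∞) = 1 - 1/2 := hhalf.symm
            _ ≤ 1 - ν {y | y v = true} := tsub_le_tsub_left h1' 1
        have h3 : ν {y | y v ≠ false} ≤ 1/2 := by
          have he : {y : List (Fin m) → Bool | y v ≠ false} = {y | y v = true} := by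
            ext y; simp
          rw [he]; exact h1'
        exact h3.trans h2
  constructor
  · intro v a
    cases h : t (a :: v) with
    | false => exact Bool.false_le _
    | true =>
      have h2 : t v = true := (ht v).mpr (((ht (a::v)).mp h).trans (hmono v a))
      rw [h2]
  · intro s
    have hint : ∀ u : List (Fin m) → Bool,
        ∫ y, d u y ∂ν = ∑' v, (ν {y | y v ≠ u v}).toReal * φ v := by
      intro u
      have heq : ∀ y, d u y
          = ∑' v, Set.indicator {y : List (Fin m) → Bool | y v ≠ u v} (fun _ => φ v) y := by
        intro y
        rw [hd]
        refine tsum_congr fun v => ?_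
        by_cases h : u v = y v
        · simp [Set.indicator_apply, h, (by simp [h.symm] : ¬ (y v ≠ u v))]
        · simp [Set.indicator_apply, h, (by simp [Ne.symm h] : y v ≠ u v)]
      have hstep : ∫ y, d u y ∂ν
          = ∫ y, (∑' v, Set.indicator {y : List (Fin m) → Bool | y v ≠ u v} (fun _ => φ v) y) ∂ν :=
        integral_congr_ae (Filter.Eventually.of_forall heq)
      have hswap : ∫ y, (∑' v, Set.indicator {y : List (Fin m) → Bool | y v ≠ u v} (fun _ => φ v) y) ∂ν
          = ∑' v, ∫ y, Set.indicator {y : List (Fin m) → Bool | y v ≠ u v} (fun _ => φ v) y ∂ν := by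
        apply integral_tsum
        · intro v
          exact (measurable_const.indicator (meas_ne v (u v))).aestronglyMeasurable
        · have hb : ∀ v : List (Fin m),
              ∫⁻ y, ‖Set.indicator {y : List (Fin m) → Bool | y v ≠ u v} (fun _ => φ v) y‖₊ ∂ν
                ≤ (‖φ v‖₊ : ℝ≥0∞) := by
            intro v
            calc ∫⁻ y, ‖Set.indicator {y : List (Fin m) → Bool | y v ≠ u v} (fun _ => φ v) y‖₊ ∂ν
                ≤ ∫⁻ _, (‖φ v‖₊ : ℝ≥0∞) ∂ν := by
                  apply lintegral_mono
                  intro y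
                  by_cases h : y ∈ {y : List (Fin m) → Bool | y v ≠ u v} <;>
                    simp [Set.indicator_apply, h]
              _ = (‖φ v‖₊ : ℝ≥0∞) := by simp
          have hs2 : Summable (fun v => ‖φ v‖₊) := by
            rw [← NNReal.summable_coe]
            simpa [Real.norm_eq_abs] using hφsum.abs
          have hfin : (∑' v, (‖φ v‖₊ : ℝ≥0∞)) ≠ ⊤ :=
            ENNReal.tsum_coe_ne_top_iff_summable.mpr hs2
          exact ne_top_of_le_ne_top hfin (ENNReal.tsum_le_tsum hb)
      rw [hstep, hswap]
      refine tsum_congr fun v => ?_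
      rw [integral_indicator_const _ (meas_ne v (u v))]
      simp [smul_eq_mul, Measure.real]
    rw [hint t, hint s]
    have hterm : ∀ v, (ν {y | y v ≠ t v}).toReal * φ v ≤ (ν {y | y v ≠ s v}).toReal * φ v := by
      intro v
      apply mul_le_mul_of_nonneg_right _ (hφpos v).le
      exact ENNReal.toReal_mono (measure_ne_top ν _) (hkey v (s v))
    have hsumm : ∀ u : List (Fin m) → Bool,
        Summable (fun v => (ν {y | y v ≠ u v}).toReal * φ v) := by
      intro u
      apply Summable.of_nonneg_of_le
        (fun v => mul_nonneg ENNReal.toReal_nonneg (hφpos v).le)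
        (fun v => ?_) hφsum
      calc (ν {y | y v ≠ u v}).toReal * φ v ≤ 1 * φ v := by
            apply mul_le_mul_of_nonneg_right _ (hφpos v).le
            rw [← ENNReal.toReal_one]
            exact ENNReal.toReal_mono one_ne_top prob_le_one
        _ = φ v := one_mul _
    exact Summable.tsum_le_tsum hterm (hsumm t) (hsumm s)
end

section
/- For the binary binomial Galton-Watson random tree with parameter p ∈ [1/2, 1], the d-mean (expected mean tree) is the deterministic full tree of depth k₀, i.e., the tree containing exactly the nodes v with gen(v) ≤ k₀, where k₀ = max{k ≥ 1 : p^{k−1} ≥ 1/2} (with k₀ = ∞ excluded by assuming p < 1). For p < 1/2, the d-mean is the tree containing only the root. -/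
open MeasureTheory ENNReal

lemma gw_integral_d (φ : List (Fin 2) → ℝ) (hφsum : Summable φ)
    (ν : Measure (List (Fin 2) → Bool)) [IsProbabilityMeasure ν]
    (t : List (Fin 2) → Bool) :
    ∫ y, (∑' v, if t v = y v then (0 : ℝ) else φ v) ∂ν
      = ∑' v, (ν {y | ¬ (t v = y v)}).toReal * φ v := by
  have hmeas : ∀ v : List (Fin 2),
      MeasurableSet {y : List (Fin 2) → Bool | ¬ (t v = y v)} := by
    intro v
    have : {y : List (Fin 2) → Bool | ¬ (t v = y v)}
        = (fun y : List (Fin 2) → Bool => y v) ⁻¹' {b | ¬ (t v = b)} := rfl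
    rw [this]
    exact measurable_pi_apply v trivial
  have hind : ∀ v (y : List (Fin 2) → Bool),
      (if t v = y v then (0 : ℝ) else φ v)
        = Set.indicator {y | ¬ (t v = y v)} (fun _ => φ v) y := by
    intro v y
    by_cases h : t v = y v <;> simp [Set.indicator, h]
  have hsm : ∀ v, AEStronglyMeasurable
      (fun y => Set.indicator {y : List (Fin 2) → Bool | ¬ (t v = y v)} (fun _ => φ v) y) ν := by
    intro v
    exact (aestronglyMeasurable_indicator_iff (hmeas v)).mpr aestronglyMeasurable_const
  have hfin : (∑' v, ∫⁻ y, ‖Set.indicator {y : List (Fin 2) → Bool | ¬ (t v = y v)} (fun _ => φ v) y‖₊ ∂ν) ≠ ⊤ := by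
    have hb : ∀ v, (∫⁻ y, ‖Set.indicator {y : List (Fin 2) → Bool | ¬ (t v = y v)} (fun _ => φ v) y‖₊ ∂ν)
        ≤ (‖φ v‖₊ : ℝ≥0∞) := by
      intro v
      have : (fun y => (‖Set.indicator {y : List (Fin 2) → Bool | ¬ (t v = y v)} (fun _ => φ v) y‖₊ : ℝ≥0∞))
          = fun y => Set.indicator {y : List (Fin 2) → Bool | ¬ (t v = y v)} (fun _ => (‖φ v‖₊ : ℝ≥0∞)) y := by
        funext y
        by_cases h : y ∈ {y : List (Fin 2) → Bool | ¬ (t v = y v)} <;> simp [Set.indicator, h]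
      rw [this, lintegral_indicator (hmeas v) _]
      simp only [lintegral_const, Measure.restrict_apply MeasurableSet.univ, Set.univ_inter]
      calc (‖φ v‖₊ : ℝ≥0∞) * ν {y | ¬ (t v = y v)} ≤ (‖φ v‖₊ : ℝ≥0∞) * 1 :=
            mul_le_mul_right prob_le_one _
        _ = ‖φ v‖₊ := by simp
    have hsum : (∑' v, (‖φ v‖₊ : ℝ≥0∞)) ≠ ⊤ := by
      rw [ENNReal.tsum_coe_ne_top_iff_summable]
      exact NNReal.summable_coe.1 (by simpa [Real.norm_eq_abs] using hφsum.abs)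
    exact ne_top_of_le_ne_top hsum (ENNReal.tsum_le_tsum hb)
  calc ∫ y, (∑' v, if t v = y v then (0 : ℝ) else φ v) ∂ν
      = ∫ y, (∑' v, Set.indicator {y : List (Fin 2) → Bool | ¬ (t v = y v)} (fun _ => φ v) y) ∂ν := by
        congr 1; funext y; exact tsum_congr fun v => hind v y
    _ = ∑' v, ∫ y, Set.indicator {y : List (Fin 2) → Bool | ¬ (t v = y v)} (fun _ => φ v) y ∂ν :=
        integral_tsum hsm hfin
    _ = ∑' v, (ν {y | ¬ (t v = y v)}).toReal * φ v := by
        refine tsum_congr fun v => ?_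
        rw [integral_indicator_const _ (hmeas v)]
        simp [smul_eq_mul, Measure.real]

lemma gw_marg (p : ℝ) (hp0 : 0 ≤ p) (hp1 : p < 1)
    (ν : Measure (List (Fin 2) → Bool)) [IsProbabilityMeasure ν]
    (hmarg : ∀ v : List (Fin 2), ν {y | y v = true} = ENNReal.ofReal (p ^ v.length))
    (v : List (Fin 2)) (b : Bool) :
    (ν {y | ¬ (b = y v)}).toReal = if b then 1 - p ^ v.length else p ^ v.length := by
  have hple : p ^ v.length ≤ 1 := pow_le_one₀ hp0 hp1.le
  have hpnn : 0 ≤ p ^ v.length := pow_nonneg hp0 _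
  have hmv : MeasurableSet {y : List (Fin 2) → Bool | y v = true} := by
    have : {y : List (Fin 2) → Bool | y v = true}
        = (fun y : List (Fin 2) → Bool => y v) ⁻¹' {b | b = true} := rfl
    rw [this]; exact measurable_pi_apply v trivial
  cases b with
  | false =>
    have : {y : List (Fin 2) → Bool | ¬ (false = y v)} = {y | y v = true} := by
      ext y; cases h : y v <;> simp [h]
    rw [this, hmarg v, ENNReal.toReal_ofReal hpnn]; simp
  | true =>
    have hset : {y : List (Fin 2) → Bool | ¬ (true = y v)} = {y | y v = true}ᶜ := by
      ext y; cases h : y v <;> simp [h]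
    rw [hset, measure_compl hmv (measure_ne_top ν _), hmarg v, measure_univ]
    rw [ENNReal.toReal_sub_of_le (ENNReal.ofReal_le_one.mpr hple) ENNReal.one_ne_top]
    simp [ENNReal.toReal_ofReal hpnn]

lemma gw_aux (p : ℝ) (hp0 : 0 ≤ p) (hp1 : p < 1)
    (φ : List (Fin 2) → ℝ) (hφpos : ∀ v, 0 < φ v) (hφsum : Summable φ)
    (ν : Measure (List (Fin 2) → Bool)) [IsProbabilityMeasure ν]
    (hmarg : ∀ v : List (Fin 2), ν {y | y v = true} = ENNReal.ofReal (p ^ v.length))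
    (t s : List (Fin 2) → Bool)
    (hopt : ∀ v : List (Fin 2), ∀ b : Bool,
      (if t v then 1 - p ^ v.length else p ^ v.length)
        ≤ (if b then 1 - p ^ v.length else p ^ v.length)) :
    ∫ y, (∑' v, if t v = y v then (0 : ℝ) else φ v) ∂ν
      ≤ ∫ y, (∑' v, if s v = y v then (0 : ℝ) else φ v) ∂ν := by
  rw [gw_integral_d φ hφsum ν t, gw_integral_d φ hφsum ν s]
  have hq : ∀ (u : List (Fin 2) → Bool) (v : List (Fin 2)),
      (ν {y | ¬ (u v = y v)}).toReal = if u v then 1 - p ^ v.length else p ^ v.length :=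
    fun u v => gw_marg p hp0 hp1 ν hmarg v (u v)
  have hbound : ∀ (u : List (Fin 2) → Bool) (v : List (Fin 2)),
      (0 ≤ (ν {y | ¬ (u v = y v)}).toReal * φ v ∧ (ν {y | ¬ (u v = y v)}).toReal * φ v ≤ φ v) := by
    intro u v
    constructor
    · exact mul_nonneg ENNReal.toReal_nonneg (hφpos v).le
    · have h1 : (ν {y | ¬ (u v = y v)}).toReal ≤ 1 := by
        have := prob_le_one (μ := ν) (s := {y | ¬ (u v = y v)})
        calc (ν {y | ¬ (u v = y v)}).toReal ≤ (1 : ℝ≥0∞).toReal :=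
              ENNReal.toReal_mono ENNReal.one_ne_top this
          _ = 1 := by simp
      nlinarith [(hφpos v).le, h1, ENNReal.toReal_nonneg (a := ν {y | ¬ (u v = y v)})]
  have hst : ∀ u : List (Fin 2) → Bool,
      Summable (fun v => (ν {y | ¬ (u v = y v)}).toReal * φ v) := by
    intro u
    exact Summable.of_nonneg_of_le (fun v => (hbound u v).1) (fun v => (hbound u v).2) hφsum
  refine Summable.tsum_le_tsum (fun v => ?_) (hst t) (hst s)
  rw [hq t v, hq s v]
  exact mul_le_mul_of_nonneg_right (hopt v (s v)) (hφpos v).le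

/-- For the binary binomial Galton-Watson tree with parameter `p`
(marginal presence probability of a node `v` of generation `|v| + 1` equal to
`p^|v|`), if `1/2 ≤ p < 1` then the full tree of depth `k₀`, with
`k₀ = max {k ≥ 1 : p^(k−1) ≥ 1/2}`, is a d-mean; and if `p < 1/2` the tree
containing only the root is a d-mean. -/
theorem galtonWatson_dMean (p : ℝ) (hp0 : 0 ≤ p) (hp1 : p < 1)
    (φ : List (Fin 2) → ℝ) (hφpos : ∀ v, 0 < φ v) (hφsum : Summable φ)
    (d : (List (Fin 2) → Bool) → (List (Fin 2) → Bool) → ℝ)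
    (hd : ∀ t y, d t y = ∑' v, if t v = y v then (0 : ℝ) else φ v)
    (ν : Measure (List (Fin 2) → Bool)) [IsProbabilityMeasure ν]
    (hmarg : ∀ v : List (Fin 2), ν {y | y v = true} = ENNReal.ofReal (p ^ v.length)) :
    ((1 / 2 : ℝ) ≤ p →
      ∀ k₀ : ℕ, 1 ≤ k₀ →
        (∀ k : ℕ, 1 ≤ k → ((1 / 2 : ℝ) ≤ p ^ (k - 1) ↔ k ≤ k₀)) →
        ∀ s : List (Fin 2) → Bool,
          ∫ y, d (fun v => decide (v.length + 1 ≤ k₀)) y ∂ν ≤ ∫ y, d s y ∂ν) ∧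
    (p < 1 / 2 →
      ∀ s : List (Fin 2) → Bool,
        ∫ y, d (fun v => decide (v = [])) y ∂ν ≤ ∫ y, d s y ∂ν) := by
  constructor
  · intro hhalf k₀ hk₀ hk s
    simp only [hd]
    refine gw_aux p hp0 hp1 φ hφpos hφsum ν hmarg _ s ?_
    intro v b
    have hkey := hk (v.length + 1) (by omega)
    simp only [Nat.add_sub_cancel] at hkey
    by_cases h : v.length + 1 ≤ k₀
    · have hp2 : (1 / 2 : ℝ) ≤ p ^ v.length := hkey.mpr h
      rw [decide_eq_true h]
      cases b <;> simp <;> linarith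
    · have hp2 : p ^ v.length < 1 / 2 := by
        by_contra hc
        exact h (hkey.mp (le_of_not_gt hc))
      rw [decide_eq_false h]
      cases b <;> simp <;> linarith
  · intro hhalf s
    simp only [hd]
    refine gw_aux p hp0 hp1 φ hφpos hφsum ν hmarg _ s ?_
    intro v b
    by_cases h : v = []
    · subst h
      rw [decide_eq_true rfl]
      cases b <;> simp [pow_le_one₀ hp0 hp1.le] <;> linarith [pow_le_one₀ (n := ([] : List (Fin 2)).length) hp0 hp1.le]
    · have hn : 1 ≤ v.length := by
        cases v with
        | nil => exact absurd rfl h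
        | cons a l => simp
      have hple : p ^ v.length ≤ p := by
        calc p ^ v.length ≤ p ^ 1 := pow_le_pow_of_le_one hp0 hp1.le hn
          _ = p := pow_one p
      rw [decide_eq_false h]
      cases b <;> simp <;> linarith
end

section
/- For i.i.d. random trees T₁, T₂, … with law ν and any node v with ν({t : t(v)=1}) > 1/2, almost surely the majority-vote empirical mean tree t*_n (defined by t*_n(v)=1 iff #{i ≤ n : Tᵢ(v)=1} ≥ n/2) satisfies t*_n(v) = 1 for all sufficiently large n. Consequently, if all marginals of ν avoid the value 1/2, then t*_n converges almost surely (in the metric d) to the unique d-mean of ν. -/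
open MeasureTheory ProbabilityTheory ENNReal Filter Topology

/-- For i.i.d. random trees `T 1, T 2, …` with law `ν` and any node `v`
with `ν {t : t v = 1} > 1/2`, almost surely the majority-vote empirical mean tree
`t*_n` (with `t*_n v = 1 ↔ #{i ≤ n : T i v = 1} ≥ n/2`) satisfies `t*_n v = 1` for all
sufficiently large `n`.  Consequently, if no marginal of `ν` equals `1/2`, then `t*_n`
converges almost surely in the metric `d` to the unique d-mean of `ν`, namely the
function `v ↦ 1 ↔ ν {t : t v = 1} > 1/2`. -/
theorem majority_vote_consistency {V : Type*} [Countable V] (φ : V → ℝ)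
    (hφpos : ∀ v, 0 < φ v) (hφsum : Summable φ)
    (d : (V → Bool) → (V → Bool) → ℝ)
    (hd : ∀ t y, d t y = ∑' v, if t v = y v then (0 : ℝ) else φ v)
    {Ω : Type*} [MeasurableSpace Ω] (P : Measure Ω) [IsProbabilityMeasure P]
    (ν : Measure (V → Bool)) [IsProbabilityMeasure ν]
    (T : ℕ → Ω → (V → Bool))
    (hmeas : ∀ i, Measurable (T i))
    (hindep : iIndepFun T P)
    (hdist : ∀ i, Measure.map (T i) P = ν)
    (tstar : ℕ → Ω → V → Bool)
    (htstar : ∀ n ω v, tstar n ω v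
      = decide (n ≤ 2 * ((Finset.range n).filter fun i => T i ω v = true).card)) :
    (∀ v : V, (1 / 2 : ℝ≥0∞) < ν {t | t v = true} →
      ∀ᵐ ω ∂P, ∃ N : ℕ, ∀ n ≥ N, tstar n ω v = true) ∧
    ((∀ v : V, ν {t | t v = true} ≠ (1 / 2 : ℝ≥0∞)) →
      ∀ᵐ ω ∂P, Tendsto
        (fun n => d (tstar n ω) (fun v => decide ((1 / 2 : ℝ≥0∞) < ν {t | t v = true})))
        atTop (nhds 0)) := by
  -- SLLN for each coordinate
  have key : ∀ v : V, ∀ᵐ ω ∂P, Tendsto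
      (fun n : ℕ => (((Finset.range n).filter fun i => T i ω v = true).card : ℝ) / n)
      atTop (𝓝 ((ν {t | t v = true}).toReal)) := by
    intro v
    set s : Set (V → Bool) := {t | t v = true} with hs_def
    have hs : MeasurableSet s := by
      have : s = (fun t : V → Bool => t v) ⁻¹' {true} := rfl
      rw [this]
      exact (measurable_pi_apply v) (measurableSet_singleton true)
    set g : (V → Bool) → ℝ := fun t => if t v = true then 1 else 0 with hg_def
    have hg : Measurable g := by
      exact (Measurable.of_discrete (f := fun b : Bool => if b = true then (1:ℝ) else 0)).comp
        (measurable_pi_apply v)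
    set X : ℕ → Ω → ℝ := fun i ω => g (T i ω) with hX_def
    have hXmeas : ∀ i, Measurable (X i) := fun i => hg.comp (hmeas i)
    have hXbd : ∀ i ω, ‖X i ω‖ ≤ 1 := by
      intro i ω
      simp only [X, g]
      split <;> simp
    have hint : Integrable (X 0) P :=
      (integrable_const (1:ℝ)).mono' (hXmeas 0).aestronglyMeasurable
        (ae_of_all _ fun ω => hXbd 0 ω)
    have hmap : ∀ i, Measure.map (X i) P = Measure.map g ν := by
      intro i
      rw [← hdist i, Measure.map_map hg (hmeas i)]
      rfl
    have hident : ∀ i, IdentDistrib (X i) (X 0) P P := fun i =>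
      ⟨(hXmeas i).aemeasurable, (hXmeas 0).aemeasurable, by rw [hmap i, hmap 0]⟩
    have hpind : Pairwise (Function.onFun (IndepFun · · P) X) := fun i j hij =>
      (hindep.indepFun hij).comp hg hg
    have hmean : P[X 0] = (ν s).toReal := by
      have h1 : P[X 0] = ∫ t, g t ∂ν := by
        rw [← hdist 0, integral_map (hmeas 0).aemeasurable hg.aestronglyMeasurable]
      have h2 : g = s.indicator (fun _ => (1:ℝ)) := by
        funext t
        simp [Set.indicator_apply, hs_def, g]
      rw [h1, h2]
      exact (integral_indicator_one (μ := ν) hs).trans (measureReal_def ν s)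
    have := strong_law_ae_real X hint hpind hident
    rw [hmean] at this
    filter_upwards [this] with ω hω
    refine hω.congr fun n => ?_
    simp only [X, g, Finset.sum_boole]
  -- each coordinate stabilizes correctly
  have key2 : ∀ v : V, ν {t | t v = true} ≠ (1 / 2 : ℝ≥0∞) →
      ∀ᵐ ω ∂P, ∀ᶠ n in atTop,
        tstar n ω v = decide ((1 / 2 : ℝ≥0∞) < ν {t | t v = true}) := by
    intro v hv
    have hne : ν {t | t v = true} ≠ ⊤ := (measure_ne_top ν _)
    rcases lt_or_gt_of_ne hv with hlt | hgt
    · -- marginal < 1/2 : eventually false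
      have h12 : ((1:ℝ≥0∞)/2).toReal = 1/2 := by
        rw [ENNReal.toReal_div]; norm_num
      have hlt' : (ν {t | t v = true}).toReal < 1/2 := by
        rw [← h12]
        exact (ENNReal.toReal_lt_toReal hne (by norm_num)).mpr hlt
      filter_upwards [key v] with ω hω
      have h1 : ∀ᶠ n in atTop,
          (((Finset.range n).filter fun i => T i ω v = true).card : ℝ) / n < 1/2 :=
        hω.eventually (eventually_lt_nhds hlt')
      filter_upwards [h1, eventually_ge_atTop 1] with n hn hn1
      have hnpos : (0:ℝ) < n := by exact_mod_cast hn1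
      have : 2 * (((Finset.range n).filter fun i => T i ω v = true).card : ℝ) < n := by
        rw [div_lt_iff₀ hnpos] at hn
        linarith
      have hnat : ¬ (n ≤ 2 * ((Finset.range n).filter fun i => T i ω v = true).card) := by
        intro hle
        have : (n:ℝ) ≤ 2 * (((Finset.range n).filter fun i => T i ω v = true).card : ℝ) := by
          exact_mod_cast hle
        linarith
      rw [htstar, decide_eq_false hnat, decide_eq_false (not_lt.mpr hlt.le)]
    · -- marginal > 1/2 : eventually true
      have h12 : ((1:ℝ≥0∞)/2).toReal = 1/2 := by
        rw [ENNReal.toReal_div]; norm_num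
      have hgt' : 1/2 < (ν {t | t v = true}).toReal := by
        rw [← h12]
        exact (ENNReal.toReal_lt_toReal (by norm_num) hne).mpr hgt
      filter_upwards [key v] with ω hω
      have h1 : ∀ᶠ n in atTop,
          1/2 < (((Finset.range n).filter fun i => T i ω v = true).card : ℝ) / n :=
        hω.eventually (eventually_gt_nhds hgt')
      filter_upwards [h1, eventually_ge_atTop 1] with n hn hn1
      have hnpos : (0:ℝ) < n := by exact_mod_cast hn1
      have : (n:ℝ) < 2 * (((Finset.range n).filter fun i => T i ω v = true).card : ℝ) := by
        rw [lt_div_iff₀ hnpos] at hn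
        linarith
      have hnat : n ≤ 2 * ((Finset.range n).filter fun i => T i ω v = true).card := by
        have : n < 2 * ((Finset.range n).filter fun i => T i ω v = true).card := by
          exact_mod_cast this
        omega
      rw [htstar, decide_eq_true hnat, decide_eq_true hgt]
  constructor
  · intro v hv
    filter_upwards [key2 v (ne_of_gt hv)] with ω hω
    rw [eventually_atTop] at hω
    obtain ⟨N, hN⟩ := hω
    exact ⟨N, fun n hn => by rw [hN n hn, decide_eq_true hv]⟩
  · intro hall
    have := ae_all_iff.mpr fun v => key2 v (hall v)
    filter_upwards [this] with ω hω
    set y : V → Bool := fun v => decide ((1 / 2 : ℝ≥0∞) < ν {t | t v = true}) with hy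
    rw [Metric.tendsto_atTop]
    intro ε hε
    -- find finite set with small tail
    obtain ⟨F, hF⟩ : ∃ F : Finset V, ∑' x : {x // x ∉ F}, φ x < ε :=
      ((tendsto_order.1 (tendsto_tsum_compl_atTop_zero φ)).2 _ hε).exists
    have hFev : ∀ᶠ n in atTop, ∀ v ∈ F, tstar n ω v = y v :=
      (eventually_all_finset F).mpr fun v _ => hω v
    rw [eventually_atTop] at hFev
    obtain ⟨N, hN⟩ := hFev
    refine ⟨N, fun n hn => ?_⟩
    have hagree := hN n hn
    have hdnonneg : 0 ≤ d (tstar n ω) y := by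
      rw [hd]
      refine tsum_nonneg fun v => ?_
      split
      · exact le_rfl
      · exact (hφpos v).le
    have hpt : ∀ v, (if tstar n ω v = y v then (0:ℝ) else φ v)
        ≤ (↑F : Set V)ᶜ.indicator φ v := by
      intro v
      by_cases hvF : v ∈ F
      · rw [if_pos (hagree v hvF)]
        exact Set.indicator_nonneg (fun x _ => (hφpos x).le) v
      · rw [Set.indicator_of_mem (by simpa using hvF)]
        split
        · exact (hφpos v).le
        · exact le_rfl
    have hsumm : Summable fun v => if tstar n ω v = y v then (0:ℝ) else φ v := by
      refine Summable.of_nonneg_of_le (fun v => ?_) (fun v => ?_) hφsum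
      · split
        · exact le_rfl
        · exact (hφpos v).le
      · split
        · exact (hφpos v).le
        · exact le_rfl
    have hdle : d (tstar n ω) y ≤ ∑' x : {x // x ∉ F}, φ x := by
      rw [hd]
      calc ∑' v, (if tstar n ω v = y v then (0:ℝ) else φ v)
          ≤ ∑' v, (↑F : Set V)ᶜ.indicator φ v :=
            hsumm.tsum_le_tsum hpt (hφsum.indicator _)
        _ = ∑' x : ↥((↑F : Set V)ᶜ), φ x := (tsum_subtype _ _).symm
        _ = ∑' x : {x // x ∉ F}, φ x := by rfl
    rw [Real.dist_eq, sub_zero, abs_of_nonneg hdnonneg]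
    exact lt_of_le_of_lt hdle hF
end
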